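/- Let 𝒳 be a finite set, T ≥ 2, and fix x_0 ∈ 𝒳. Let q(x_t | x_{t−1}) for t = 1,…,T be Markov transition kernels on 𝒳 defining the forward joint q(x_{1:T} | x_0) = ∏_{t=1}^T q(x_t | x_{t−1}); denote by q(x_t | x_0) the induced marginals and by q(x_{t−1} | x_t, x_0) the induced Bayes posteriors (assume all relevant probabilities are strictly positive). Let p(x_T), p(x_{t−1} | x_t) for t = 1,…,T be strictly positive probability mass functions defining the reverse joint p(x_{0:T}) = p(x_T) ∏_{t=1}^T p(x_{t−1} | x_t). Then log Σ_{x_{1:T}} p(x_{0:T}) ≥ Σ_{x_1} q(x_1 | x_0) log p(x_0 | x_1) − D_KL(q(x_T | x_0) ∥ p(x_T)) − Σ_{t=2}^T Σ_{x_t} q(x_t | x_0) D_KL(q(x_{t−1} | x_t, x_0) ∥ p(x_{t−1} | x_t)). -/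

import Mathlib

/-- Kullback–Leibler divergence between probability mass functions on a finite
set. -/
noncomputable def KLdiv {X : Type*} [Fintype X] (q p : X → ℝ) : ℝ :=
  ∑ x, q x * Real.log (q x / p x)

/-- The value at time `t ∈ {0,…,T}` of the trajectory `x_{1:T} = τ` extended by
`x_0` at time `0`. -/
def trajVal {X : Type*} {T : ℕ} (x0 : X) (τ : Fin T → X) (t : ℕ) : X :=
  if h : t - 1 < T ∧ t ≠ 0 then τ ⟨t - 1, h.1⟩ else x0

/-- Forward joint probability `q(x_{1:T} | x_0) = ∏_{t=1}^T q(x_t | x_{t-1})`,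
where `Kf t u v = q(x_t = v | x_{t-1} = u)`. -/
noncomputable def fwdJoint {X : Type*} {T : ℕ} (Kf : ℕ → X → X → ℝ) (x0 : X)
    (τ : Fin T → X) : ℝ :=
  ∏ t ∈ Finset.Icc 1 T, Kf t (trajVal x0 τ (t - 1)) (trajVal x0 τ t)

/-- Induced forward marginal `q(x_t = x | x_0)`. -/
noncomputable def fwdMarg {X : Type*} [Fintype X] [DecidableEq X] (T : ℕ)
    (Kf : ℕ → X → X → ℝ) (x0 : X) (t : ℕ) (x : X) : ℝ :=
  ∑ τ : Fin T → X, if trajVal x0 τ t = x then fwdJoint Kf x0 τ else 0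

/-- Induced Bayes posterior `q(x_{t-1} = u | x_t = xt, x_0)`. -/
noncomputable def fwdPost {X : Type*} [Fintype X] [DecidableEq X] (T : ℕ)
    (Kf : ℕ → X → X → ℝ) (x0 : X) (t : ℕ) (xt u : X) : ℝ :=
  (∑ τ : Fin T → X,
      if trajVal x0 τ t = xt ∧ trajVal x0 τ (t - 1) = u then fwdJoint Kf x0 τ else 0)
    / fwdMarg T Kf x0 t xt

/-- Reverse joint probability `p(x_{0:T}) = p(x_T) ∏_{t=1}^T p(x_{t-1} | x_t)`,
where `pr t v u = p(x_{t-1} = u | x_t = v)`, evaluated on the trajectory with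
`x_0 = x0` and `x_{1:T} = τ`. -/
noncomputable def revJoint {X : Type*} {T : ℕ} (pT : X → ℝ) (pr : ℕ → X → X → ℝ)
    (x0 : X) (τ : Fin T → X) : ℝ :=
  pT (trajVal x0 τ T) * ∏ t ∈ Finset.Icc 1 T, pr t (trajVal x0 τ t) (trajVal x0 τ (t - 1))


set_option linter.unusedSectionVars false

section Aux
variable {X : Type*} [Fintype X] [DecidableEq X]

lemma trajVal_zero {T : ℕ} (x0 : X) (τ : Fin T → X) : trajVal x0 τ 0 = x0 := by
  simp [trajVal]

lemma trajVal_snoc_of_le {T : ℕ} (x0 : X) (σ : Fin T → X) (v : X) {s : ℕ} (hs : s ≤ T) :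
    trajVal x0 (Fin.snoc σ v : Fin (T+1) → X) s = trajVal x0 σ s := by
  rcases s with _ | k
  · simp [trajVal]
  · have hk : k < T := hs
    have h1 : k < T + 1 := Nat.lt_succ_of_lt hk
    simp only [trajVal, Nat.succ_sub_one]
    rw [dif_pos ⟨h1, Nat.succ_ne_zero k⟩, dif_pos ⟨hk, Nat.succ_ne_zero k⟩]
    have : (⟨k, h1⟩ : Fin (T+1)) = Fin.castSucc ⟨k, hk⟩ := rfl
    rw [this, Fin.snoc_castSucc]

lemma trajVal_snoc_last {T : ℕ} (x0 : X) (σ : Fin T → X) (v : X) :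
    trajVal x0 (Fin.snoc σ v : Fin (T+1) → X) (T + 1) = v := by
  simp only [trajVal, Nat.succ_sub_one]
  rw [dif_pos ⟨Nat.lt_succ_self T, Nat.succ_ne_zero T⟩]
  have : (⟨T, Nat.lt_succ_self T⟩ : Fin (T+1)) = Fin.last T := rfl
  rw [this, Fin.snoc_last]

lemma fwdJoint_snoc {T : ℕ} (Kf : ℕ → X → X → ℝ) (x0 : X) (σ : Fin T → X) (v : X) :
    fwdJoint Kf x0 (Fin.snoc σ v : Fin (T+1) → X)
      = fwdJoint Kf x0 σ * Kf (T+1) (trajVal x0 σ T) v := by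
  unfold fwdJoint
  rw [Finset.prod_Icc_succ_top (Nat.le_add_left 1 T)]
  congr 1
  · apply Finset.prod_congr rfl
    intro t ht
    rw [Finset.mem_Icc] at ht
    rw [trajVal_snoc_of_le x0 σ v (le_trans (Nat.sub_le t 1) ht.2),
        trajVal_snoc_of_le x0 σ v ht.2]
  · rw [Nat.add_sub_cancel, trajVal_snoc_of_le x0 σ v le_rfl, trajVal_snoc_last]

def snocEquiv (X : Type*) (T : ℕ) : ((Fin T → X) × X) ≃ (Fin (T+1) → X) where
  toFun p := Fin.snoc p.1 p.2
  invFun τ := (Fin.init τ, τ (Fin.last T))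
  left_inv p := by simp
  right_inv τ := by simp

lemma sum_snoc {T : ℕ} (f : (Fin (T+1) → X) → ℝ) :
    ∑ τ : Fin (T+1) → X, f τ = ∑ σ : Fin T → X, ∑ v : X, f (Fin.snoc σ v) := by
  rw [← Equiv.sum_comp (snocEquiv X T) f, Fintype.sum_prod_type]
  rfl

end Aux

set_option linter.unusedSectionVars false

section Aux2
variable {X : Type*} [Fintype X] [DecidableEq X]

noncomputable def marg (Kf : ℕ → X → X → ℝ) (x0 : X) : ℕ → X → ℝ
  | 0 => fun x => if x = x0 then 1 else 0
  | (t+1) => fun x => ∑ u, marg Kf x0 t u * Kf (t+1) u x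

variable (Kf : ℕ → X → X → ℝ) (x0 : X)

lemma marg_nonneg (hKf : ∀ t u v, 0 < Kf t u v) : ∀ t x, 0 ≤ marg Kf x0 t x := by
  intro t
  induction t with
  | zero => intro x; simp only [marg]; split <;> norm_num
  | succ t ih =>
    intro x
    exact Finset.sum_nonneg fun u _ => mul_nonneg (ih u) (hKf _ _ _).le

lemma marg_sum (hKf_sum : ∀ t u, ∑ v, Kf t u v = 1) : ∀ t, ∑ x, marg Kf x0 t x = 1 := by
  intro t
  induction t with
  | zero => simp [marg]
  | succ t ih =>
    simp only [marg]
    rw [Finset.sum_comm]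
    simp only [← Finset.mul_sum, hKf_sum, mul_one, ih]

lemma marg_pos (hKf : ∀ t u v, 0 < Kf t u v) (hKf_sum : ∀ t u, ∑ v, Kf t u v = 1) :
    ∀ t x, 1 ≤ t → 0 < marg Kf x0 t x := by
  rintro (_ | t) x ht
  · omega
  · have hex : ∃ u, 0 < marg Kf x0 t u := by
      by_contra h
      push_neg at h
      have : ∑ x, marg Kf x0 t x = 0 := le_antisymm (Finset.sum_nonpos fun u _ => h u)
        (Finset.sum_nonneg fun u _ => marg_nonneg Kf x0 hKf t u)
      rw [marg_sum Kf x0 hKf_sum] at this; norm_num at this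
    obtain ⟨u0, hu0⟩ := hex
    simp only [marg]
    exact Finset.sum_pos' (fun u _ => mul_nonneg (marg_nonneg Kf x0 hKf t u) (hKf _ _ _).le)
      ⟨u0, Finset.mem_univ _, mul_pos hu0 (hKf _ _ _)⟩

/-- Master lemma B: sum of joint times function of final value. -/
lemma sum_fwdJoint_last : ∀ (T : ℕ) (G : X → ℝ),
    ∑ τ : Fin T → X, fwdJoint Kf x0 τ * G (trajVal x0 τ T)
      = ∑ x, marg Kf x0 T x * G x := by
  intro T
  induction T with
  | zero =>
    intro G
    simp [fwdJoint, trajVal, marg, Finset.sum_ite_eq']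
  | succ T ih =>
    intro G
    rw [sum_snoc]
    have h1 : ∀ σ : Fin T → X, ∀ v,
        fwdJoint Kf x0 (Fin.snoc σ v : Fin (T+1) → X)
          * G (trajVal x0 (Fin.snoc σ v : Fin (T+1) → X) (T+1))
        = fwdJoint Kf x0 σ * (Kf (T+1) (trajVal x0 σ T) v * G v) := by
      intro σ v
      rw [fwdJoint_snoc, trajVal_snoc_last]; ring
    calc ∑ σ : Fin T → X, ∑ v, fwdJoint Kf x0 (Fin.snoc σ v : Fin (T+1) → X)
            * G (trajVal x0 (Fin.snoc σ v : Fin (T+1) → X) (T+1))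
        = ∑ σ : Fin T → X, fwdJoint Kf x0 σ * (∑ v, Kf (T+1) (trajVal x0 σ T) v * G v) := by
          simp only [Finset.mul_sum]
          exact Finset.sum_congr rfl fun σ _ => Finset.sum_congr rfl fun v _ => h1 σ v
      _ = ∑ u, marg Kf x0 T u * ∑ v, Kf (T+1) u v * G v :=
          ih (fun u => ∑ v, Kf (T+1) u v * G v)
      _ = ∑ x, marg Kf x0 (T+1) x * G x := by
          simp only [marg, Finset.sum_mul, Finset.mul_sum]
          rw [Finset.sum_comm]
          exact Finset.sum_congr rfl fun v _ => Finset.sum_congr rfl fun u _ => by ring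

/-- Master lemma A: sum of joint times function of two consecutive values. -/
lemma sum_fwdJoint_two (hKf_sum : ∀ t u, ∑ v, Kf t u v = 1) (s : ℕ) :
    ∀ T, s + 1 ≤ T → ∀ F : X → X → ℝ,
    ∑ τ : Fin T → X, fwdJoint Kf x0 τ * F (trajVal x0 τ s) (trajVal x0 τ (s+1))
      = ∑ u, ∑ v, marg Kf x0 s u * Kf (s+1) u v * F u v := by
  intro T hT
  induction T, hT using Nat.le_induction with
  | base =>
    intro F
    rw [sum_snoc]
    have h1 : ∀ σ : Fin s → X, ∀ v,
        fwdJoint Kf x0 (Fin.snoc σ v : Fin (s+1) → X)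
          * F (trajVal x0 (Fin.snoc σ v : Fin (s+1) → X) s)
              (trajVal x0 (Fin.snoc σ v : Fin (s+1) → X) (s+1))
        = fwdJoint Kf x0 σ * (Kf (s+1) (trajVal x0 σ s) v * F (trajVal x0 σ s) v) := by
      intro σ v
      rw [fwdJoint_snoc, trajVal_snoc_last, trajVal_snoc_of_le x0 σ v le_rfl]; ring
    calc ∑ σ : Fin s → X, ∑ v, fwdJoint Kf x0 (Fin.snoc σ v : Fin (s+1) → X)
            * F (trajVal x0 (Fin.snoc σ v : Fin (s+1) → X) s)
                (trajVal x0 (Fin.snoc σ v : Fin (s+1) → X) (s+1))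
        = ∑ σ : Fin s → X, fwdJoint Kf x0 σ
            * (∑ v, Kf (s+1) (trajVal x0 σ s) v * F (trajVal x0 σ s) v) := by
          simp only [Finset.mul_sum]
          exact Finset.sum_congr rfl fun σ _ => Finset.sum_congr rfl fun v _ => h1 σ v
      _ = ∑ u, marg Kf x0 s u * ∑ v, Kf (s+1) u v * F u v :=
          sum_fwdJoint_last Kf x0 s (fun u => ∑ v, Kf (s+1) u v * F u v)
      _ = ∑ u, ∑ v, marg Kf x0 s u * Kf (s+1) u v * F u v := by
          simp only [Finset.mul_sum]
          exact Finset.sum_congr rfl fun u _ => Finset.sum_congr rfl fun v _ => by ring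
  | succ T hT ih =>
    intro F
    rw [sum_snoc, ← ih F]
    apply Finset.sum_congr rfl
    intro σ _
    have h1 : ∀ v, fwdJoint Kf x0 (Fin.snoc σ v : Fin (T+1) → X)
          * F (trajVal x0 (Fin.snoc σ v : Fin (T+1) → X) s)
              (trajVal x0 (Fin.snoc σ v : Fin (T+1) → X) (s+1))
        = fwdJoint Kf x0 σ * F (trajVal x0 σ s) (trajVal x0 σ (s+1))
            * Kf (T+1) (trajVal x0 σ T) v := by
      intro v
      rw [fwdJoint_snoc, trajVal_snoc_of_le x0 σ v (by omega),
          trajVal_snoc_of_le x0 σ v (by omega)]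
      ring
    rw [Finset.sum_congr rfl fun v _ => h1 v, ← Finset.mul_sum, hKf_sum, mul_one]

end Aux2

section Aux3
variable {X : Type*} [Fintype X] [DecidableEq X]
variable (Kf : ℕ → X → X → ℝ) (x0 : X)

lemma fwdMarg_eq_marg (hKf_sum : ∀ t u, ∑ v, Kf t u v = 1) {T t : ℕ}
    (ht1 : 1 ≤ t) (htT : t ≤ T) (x : X) :
    fwdMarg T Kf x0 t x = marg Kf x0 t x := by
  obtain ⟨s, rfl⟩ : ∃ s, t = s + 1 := ⟨t - 1, by omega⟩
  unfold fwdMarg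
  have h1 : ∀ τ : Fin T → X, (if trajVal x0 τ (s+1) = x then fwdJoint Kf x0 τ else 0)
      = fwdJoint Kf x0 τ * (if trajVal x0 τ (s+1) = x then (1:ℝ) else 0) := by
    intro τ; split <;> simp
  rw [Finset.sum_congr rfl fun τ _ => h1 τ,
    sum_fwdJoint_two Kf x0 hKf_sum s T htT (fun _ b => if b = x then (1:ℝ) else 0)]
  simp only [mul_ite, mul_one, mul_zero, Finset.sum_ite_eq', Finset.mem_univ, if_true]
  simp [marg]

lemma fwdPost_num_eq (hKf_sum : ∀ t u, ∑ v, Kf t u v = 1) {T t : ℕ}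
    (ht1 : 1 ≤ t) (htT : t ≤ T) (xt u : X) :
    (∑ τ : Fin T → X,
        if trajVal x0 τ t = xt ∧ trajVal x0 τ (t - 1) = u then fwdJoint Kf x0 τ else 0)
      = marg Kf x0 (t-1) u * Kf t u xt := by
  obtain ⟨s, rfl⟩ : ∃ s, t = s + 1 := ⟨t - 1, by omega⟩
  have h1 : ∀ τ : Fin T → X,
      (if trajVal x0 τ (s+1) = xt ∧ trajVal x0 τ (s+1-1) = u then fwdJoint Kf x0 τ else 0)
      = fwdJoint Kf x0 τ *
        (if trajVal x0 τ (s+1) = xt ∧ trajVal x0 τ s = u then (1:ℝ) else 0) := by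
    intro τ; simp only [Nat.add_sub_cancel]; split <;> simp
  rw [Finset.sum_congr rfl fun τ _ => h1 τ,
    sum_fwdJoint_two Kf x0 hKf_sum s T htT (fun a b => if b = xt ∧ a = u then (1:ℝ) else 0)]
  simp only [Nat.add_sub_cancel, mul_ite, mul_one, mul_zero, ite_and]
  rw [Finset.sum_comm]
  simp [Finset.sum_ite_eq', Finset.sum_ite_eq]

lemma fwdJoint_pos {T : ℕ} (hKf : ∀ t u v, 0 < Kf t u v) (τ : Fin T → X) :
    0 < fwdJoint Kf x0 τ :=
  Finset.prod_pos fun t _ => hKf _ _ _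

lemma sum_fwdJoint_eq_one (hKf_sum : ∀ t u, ∑ v, Kf t u v = 1) (T : ℕ) :
    ∑ τ : Fin T → X, fwdJoint Kf x0 τ = 1 := by
  have := sum_fwdJoint_last Kf x0 T (fun _ => (1:ℝ))
  simpa [marg_sum Kf x0 hKf_sum T] using this

end Aux3

lemma log_sum_ge_sum_log {Y : Type*} [Fintype Y] [Nonempty Y] (q p : Y → ℝ)
    (hq : ∀ y, 0 < q y) (hp : ∀ y, 0 < p y) (hq1 : ∑ y, q y = 1) :
    Real.log (∑ y, p y) ≥ ∑ y, q y * Real.log (p y / q y) := by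
  set S := ∑ y, p y with hS
  have hS0 : 0 < S := Finset.sum_pos (fun y _ => hp y) Finset.univ_nonempty
  have key : ∀ y : Y, q y * Real.log (p y / q y)
      = q y * Real.log (p y / (q y * S)) + q y * Real.log S := by
    intro y
    have h1 : (0:ℝ) < p y / (q y * S) := div_pos (hp y) (mul_pos (hq y) hS0)
    have hqy : q y ≠ 0 := (hq y).ne'
    rw [← mul_add, ← Real.log_mul (ne_of_gt h1) (ne_of_gt hS0)]
    congr 2
    field_simp
  have hle : ∑ y, q y * Real.log (p y / (q y * S)) ≤ 0 := by
    have h1 : ∀ y : Y, q y * Real.log (p y / (q y * S)) ≤ p y / S - q y := by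
      intro y
      have hlog := Real.log_le_sub_one_of_pos
        (x := p y / (q y * S)) (div_pos (hp y) (mul_pos (hq y) hS0))
      calc q y * Real.log (p y / (q y * S)) ≤ q y * (p y / (q y * S) - 1) :=
            mul_le_mul_of_nonneg_left hlog (hq y).le
        _ = p y / S - q y := by
            have hqy : q y ≠ 0 := (hq y).ne'
            have hSne : S ≠ 0 := hS0.ne'
            field_simp
    calc ∑ y, q y * Real.log (p y / (q y * S)) ≤ ∑ y, (p y / S - q y) :=
          Finset.sum_le_sum fun y _ => h1 y
      _ = (∑ y, p y) / S - ∑ y, q y := by rw [Finset.sum_sub_distrib, Finset.sum_div]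
      _ = 0 := by rw [← hS, hq1, div_self (ne_of_gt hS0)]; ring
  calc ∑ y, q y * Real.log (p y / q y)
      = ∑ y, q y * Real.log (p y / (q y * S)) + (∑ y, q y) * Real.log S := by
        rw [Finset.sum_congr rfl fun y _ => key y, Finset.sum_add_distrib, Finset.sum_mul]
    _ ≤ 0 + 1 * Real.log S := by rw [hq1]; exact add_le_add_left hle _
    _ = Real.log S := by ring

section Main
variable {X : Type*} [Fintype X] [DecidableEq X]
variable (Kf pr : ℕ → X → X → ℝ) (pT : X → ℝ) (x0 : X)

noncomputable def Wterm (t : ℕ) : ℝ :=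
  ∑ u, ∑ v, marg Kf x0 (t-1) u * Kf t u v
    * (Real.log (pr t v u) - Real.log (Kf t u v))

noncomputable def Ent (t : ℕ) : ℝ :=
  ∑ x, marg Kf x0 t x * Real.log (marg Kf x0 t x)

noncomputable def Cterm (T t : ℕ) : ℝ :=
  ∑ xt, fwdMarg T Kf x0 t xt
    * KLdiv (fun u => fwdPost T Kf x0 t xt u) (fun u => pr t xt u)

variable {Kf pr pT x0}

variable (hKf_pos : ∀ t u v, 0 < Kf t u v) (hKf_sum : ∀ t u, ∑ v, Kf t u v = 1)
  (hpr_pos : ∀ t v u, 0 < pr t v u)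

section
include hKf_pos hKf_sum hpr_pos

lemma Cterm_eq {T s : ℕ} (hT : s + 2 ≤ T) (xt : X) :
    fwdMarg T Kf x0 (s+2) xt
      * KLdiv (fun u => fwdPost T Kf x0 (s+2) xt u) (fun u => pr (s+2) xt u)
    = ∑ u, marg Kf x0 (s+1) u * Kf (s+2) u xt
        * (Real.log (marg Kf x0 (s+1) u) + Real.log (Kf (s+2) u xt)
            - Real.log (marg Kf x0 (s+2) xt) - Real.log (pr (s+2) xt u)) := by
  have hM : fwdMarg T Kf x0 (s+2) xt = marg Kf x0 (s+2) xt :=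
    fwdMarg_eq_marg Kf x0 hKf_sum (by omega) hT xt
  have hc : 0 < marg Kf x0 (s+2) xt := marg_pos Kf x0 hKf_pos hKf_sum _ xt (by omega)
  have ha : ∀ u, 0 < marg Kf x0 (s+1) u :=
    fun u => marg_pos Kf x0 hKf_pos hKf_sum _ u (by omega)
  have hpost : ∀ u, fwdPost T Kf x0 (s+2) xt u
      = marg Kf x0 (s+1) u * Kf (s+2) u xt / marg Kf x0 (s+2) xt := by
    intro u
    unfold fwdPost
    rw [fwdPost_num_eq Kf x0 hKf_sum (by omega) hT, hM]
    norm_num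
  unfold KLdiv
  rw [Finset.mul_sum]
  apply Finset.sum_congr rfl
  intro u _
  simp only [hpost]
  have h1 : marg Kf x0 (s+2) xt * (marg Kf x0 (s+1) u * Kf (s+2) u xt / marg Kf x0 (s+2) xt)
      = marg Kf x0 (s+1) u * Kf (s+2) u xt := by
    field_simp
  have h2 : Real.log (marg Kf x0 (s+1) u * Kf (s+2) u xt / marg Kf x0 (s+2) xt
        / pr (s+2) xt u)
      = Real.log (marg Kf x0 (s+1) u) + Real.log (Kf (s+2) u xt)
        - Real.log (marg Kf x0 (s+2) xt) - Real.log (pr (s+2) xt u) := by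
    rw [Real.log_div (ne_of_gt (div_pos (mul_pos (ha u) (hKf_pos _ _ _)) hc)) (hpr_pos _ _ _).ne',
        Real.log_div (ne_of_gt (mul_pos (ha u) (hKf_pos _ _ _))) hc.ne',
        Real.log_mul (ha u).ne' (hKf_pos _ _ _).ne']
  have hcne : marg Kf x0 (s+2) xt ≠ 0 := hc.ne'
  rw [hM, h2]
  field_simp

lemma Wterm_add_Cterm {T s : ℕ} (hT : s + 2 ≤ T) :
    Wterm Kf pr x0 (s+2) + Cterm Kf pr x0 T (s+2)
      = Ent Kf x0 (s+1) - Ent Kf x0 (s+2) := by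
  have hCeq : Cterm Kf pr x0 T (s+2)
      = ∑ u, ∑ v, marg Kf x0 (s+1) u * Kf (s+2) u v
          * (Real.log (marg Kf x0 (s+1) u) + Real.log (Kf (s+2) u v)
              - Real.log (marg Kf x0 (s+2) v) - Real.log (pr (s+2) v u)) := by
    unfold Cterm
    rw [Finset.sum_congr rfl fun xt _ => Cterm_eq hKf_pos hKf_sum hpr_pos hT xt]
    exact Finset.sum_comm
  have hW : Wterm Kf pr x0 (s+2)
      = ∑ u, ∑ v, marg Kf x0 (s+1) u * Kf (s+2) u v
          * (Real.log (pr (s+2) v u) - Real.log (Kf (s+2) u v)) := by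
    unfold Wterm
    norm_num
  rw [hW, hCeq, ← Finset.sum_add_distrib]
  have hcomb : ∀ u : X, ((∑ v, marg Kf x0 (s+1) u * Kf (s+2) u v
          * (Real.log (pr (s+2) v u) - Real.log (Kf (s+2) u v)))
        + ∑ v, marg Kf x0 (s+1) u * Kf (s+2) u v
          * (Real.log (marg Kf x0 (s+1) u) + Real.log (Kf (s+2) u v)
              - Real.log (marg Kf x0 (s+2) v) - Real.log (pr (s+2) v u)))
      = ∑ v, marg Kf x0 (s+1) u * Kf (s+2) u v
          * (Real.log (marg Kf x0 (s+1) u) - Real.log (marg Kf x0 (s+2) v)) := by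
    intro u
    rw [← Finset.sum_add_distrib]
    exact Finset.sum_congr rfl fun v _ => by ring
  rw [Finset.sum_congr rfl fun u _ => hcomb u]
  have hsplit : ∀ u : X, (∑ v, marg Kf x0 (s+1) u * Kf (s+2) u v
        * (Real.log (marg Kf x0 (s+1) u) - Real.log (marg Kf x0 (s+2) v)))
      = (∑ v, marg Kf x0 (s+1) u * Kf (s+2) u v * Real.log (marg Kf x0 (s+1) u))
        - ∑ v, marg Kf x0 (s+1) u * Kf (s+2) u v * Real.log (marg Kf x0 (s+2) v) := by
    intro u
    rw [← Finset.sum_sub_distrib]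
    exact Finset.sum_congr rfl fun v _ => by ring
  rw [Finset.sum_congr rfl fun u _ => hsplit u, Finset.sum_sub_distrib]
  congr 1
  · -- first piece is Ent (s+1)
    unfold Ent
    apply Finset.sum_congr rfl
    intro u _
    have : (∑ v, marg Kf x0 (s+1) u * Kf (s+2) u v * Real.log (marg Kf x0 (s+1) u))
        = (marg Kf x0 (s+1) u * Real.log (marg Kf x0 (s+1) u)) * ∑ v, Kf (s+2) u v := by
      rw [Finset.mul_sum]
      exact Finset.sum_congr rfl fun v _ => by ring
    rw [this, hKf_sum, mul_one]
  · -- second piece is Ent (s+2)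
    unfold Ent
    rw [Finset.sum_comm]
    apply Finset.sum_congr rfl
    intro v _
    have : (∑ u, marg Kf x0 (s+1) u * Kf (s+2) u v * Real.log (marg Kf x0 (s+2) v))
        = (∑ u, marg Kf x0 (s+1) u * Kf (s+2) u v) * Real.log (marg Kf x0 (s+2) v) := by
      rw [Finset.sum_mul]
    rw [this]
    rfl

end
end Main


/-- The standard variational lower bound (VLB) decomposition of the data
log-likelihood for a discrete-time diffusion model with forward kernels `q`
and reverse model `p`. -/
theorem discrete_time_vlb
    {X : Type*} [Fintype X] [DecidableEq X] (T : ℕ) (hT : 2 ≤ T) (x0 : X)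
    (Kf : ℕ → X → X → ℝ)
    (hKf_pos : ∀ t u v, 0 < Kf t u v) (hKf_sum : ∀ t u, ∑ v, Kf t u v = 1)
    (pT : X → ℝ) (hpT_pos : ∀ x, 0 < pT x) (hpT_sum : ∑ x, pT x = 1)
    (pr : ℕ → X → X → ℝ)
    (hpr_pos : ∀ t v u, 0 < pr t v u) (hpr_sum : ∀ t v, ∑ u, pr t v u = 1) :
    Real.log (∑ τ : Fin T → X, revJoint pT pr x0 τ)
      ≥ (∑ x1, fwdMarg T Kf x0 1 x1 * Real.log (pr 1 x1 x0))
        - KLdiv (fwdMarg T Kf x0 T) pT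
        - ∑ t ∈ Finset.Icc 2 T, ∑ xt,
            fwdMarg T Kf x0 t xt
              * KLdiv (fun u => fwdPost T Kf x0 t xt u) (fun u => pr t xt u) := by
  rcases isEmpty_or_nonempty X with hE | hNE
  · exfalso; simp at hpT_sum
  have hqpos : ∀ τ : Fin T → X, 0 < fwdJoint Kf x0 τ := fwdJoint_pos Kf x0 hKf_pos
  have hPpos : ∀ τ : Fin T → X, 0 < revJoint pT pr x0 τ := fun τ =>
    mul_pos (hpT_pos _) (Finset.prod_pos fun t _ => hpr_pos _ _ _)
  -- Jensen step
  have hJ : Real.log (∑ τ : Fin T → X, revJoint pT pr x0 τ)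
      ≥ ∑ τ : Fin T → X, fwdJoint Kf x0 τ
          * Real.log (revJoint pT pr x0 τ / fwdJoint Kf x0 τ) :=
    log_sum_ge_sum_log _ _ hqpos hPpos (sum_fwdJoint_eq_one Kf x0 hKf_sum T)
  -- expansion of the log-ratio
  have hlr : ∀ τ : Fin T → X,
      Real.log (revJoint pT pr x0 τ / fwdJoint Kf x0 τ)
        = Real.log (pT (trajVal x0 τ T))
          + ∑ t ∈ Finset.Icc 1 T,
              (Real.log (pr t (trajVal x0 τ t) (trajVal x0 τ (t-1)))
                - Real.log (Kf t (trajVal x0 τ (t-1)) (trajVal x0 τ t))) := by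
    intro τ
    rw [Real.log_div (hPpos τ).ne' (hqpos τ).ne']
    unfold revJoint fwdJoint
    rw [Real.log_mul (hpT_pos _).ne' (Finset.prod_pos fun t _ => hpr_pos _ _ _).ne',
        Real.log_prod fun t _ => (hpr_pos _ _ _).ne',
        Real.log_prod fun t _ => (hKf_pos _ _ _).ne',
        add_sub_assoc, ← Finset.sum_sub_distrib]
  -- per-time contribution
  have hWt : ∀ t ∈ Finset.Icc 1 T, (∑ τ : Fin T → X, fwdJoint Kf x0 τ *
      (Real.log (pr t (trajVal x0 τ t) (trajVal x0 τ (t-1)))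
        - Real.log (Kf t (trajVal x0 τ (t-1)) (trajVal x0 τ t))))
      = Wterm Kf pr x0 t := by
    intro t ht
    rw [Finset.mem_Icc] at ht
    obtain ⟨s, rfl⟩ : ∃ s, t = s + 1 := ⟨t - 1, by omega⟩
    exact sum_fwdJoint_two Kf x0 hKf_sum s T ht.2
      (fun a b => Real.log (pr (s+1) b a) - Real.log (Kf (s+1) a b))
  have hexp : ∑ τ : Fin T → X, fwdJoint Kf x0 τ
        * Real.log (revJoint pT pr x0 τ / fwdJoint Kf x0 τ)
      = (∑ x, marg Kf x0 T x * Real.log (pT x))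
        + ∑ t ∈ Finset.Icc 1 T, Wterm Kf pr x0 t := by
    calc ∑ τ : Fin T → X, fwdJoint Kf x0 τ
            * Real.log (revJoint pT pr x0 τ / fwdJoint Kf x0 τ)
        = ∑ τ : Fin T → X, (fwdJoint Kf x0 τ * Real.log (pT (trajVal x0 τ T))
            + ∑ t ∈ Finset.Icc 1 T, fwdJoint Kf x0 τ *
                (Real.log (pr t (trajVal x0 τ t) (trajVal x0 τ (t-1)))
                  - Real.log (Kf t (trajVal x0 τ (t-1)) (trajVal x0 τ t)))) := by
          apply Finset.sum_congr rfl
          intro τ _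
          rw [hlr τ, mul_add, Finset.mul_sum]
      _ = (∑ τ : Fin T → X, fwdJoint Kf x0 τ * Real.log (pT (trajVal x0 τ T)))
            + ∑ τ : Fin T → X, ∑ t ∈ Finset.Icc 1 T, fwdJoint Kf x0 τ *
                (Real.log (pr t (trajVal x0 τ t) (trajVal x0 τ (t-1)))
                  - Real.log (Kf t (trajVal x0 τ (t-1)) (trajVal x0 τ t))) :=
          Finset.sum_add_distrib
      _ = (∑ x, marg Kf x0 T x * Real.log (pT x))
            + ∑ t ∈ Finset.Icc 1 T, Wterm Kf pr x0 t := by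
          congr 1
          · exact sum_fwdJoint_last Kf x0 T (fun x => Real.log (pT x))
          · rw [Finset.sum_comm]
            exact Finset.sum_congr rfl hWt
  -- the t = 1 term
  have hm1v : ∀ v : X, marg Kf x0 1 v = Kf 1 x0 v := by
    intro v
    show (∑ u, marg Kf x0 0 u * Kf 1 u v) = Kf 1 x0 v
    simp [marg, ite_mul, one_mul, zero_mul, Finset.sum_ite_eq']
  have hW1 : Wterm Kf pr x0 1
      = (∑ v, marg Kf x0 1 v * Real.log (pr 1 v x0)) - Ent Kf x0 1 := by
    unfold Wterm Ent
    have h0 : (1:ℕ) - 1 = 0 := rfl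
    rw [h0]
    rw [Finset.sum_comm]
    have hmarg0 : ∀ u : X, u ≠ x0 → marg Kf x0 0 u = 0 := by
      intro u hu; simp [marg, hu]
    have hmarg0' : marg Kf x0 0 x0 = 1 := by
      simp [marg]
    have hcol : ∀ v : X,
        (∑ u, marg Kf x0 0 u * Kf 1 u v * (Real.log (pr 1 v u) - Real.log (Kf 1 u v)))
          = marg Kf x0 1 v * (Real.log (pr 1 v x0) - Real.log (marg Kf x0 1 v)) := by
      intro v
      rw [Finset.sum_eq_single_of_mem x0 (Finset.mem_univ x0)
        (fun u _ hu => by rw [hmarg0 u hu]; ring), hmarg0', hm1v v]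
      ring
    rw [Finset.sum_congr rfl fun v _ => hcol v, ← Finset.sum_sub_distrib]
    exact Finset.sum_congr rfl fun v _ => by ring
  -- telescoping entropies
  have htel : ∑ t ∈ Finset.Icc 2 T, (Ent Kf x0 (t-1) - Ent Kf x0 t)
      = Ent Kf x0 1 - Ent Kf x0 T := by
    rw [← Finset.Ico_add_one_right_eq_Icc, Finset.sum_Ico_eq_sum_range]
    have h : ∀ i ∈ Finset.range (T + 1 - 2),
        Ent Kf x0 (2 + i - 1) - Ent Kf x0 (2 + i)
          = (fun j => Ent Kf x0 (j+1)) i - (fun j => Ent Kf x0 (j+1)) (i+1) := by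
      intro i _
      have e1 : 2 + i - 1 = i + 1 := by omega
      have e2 : 2 + i = i + 1 + 1 := by omega
      rw [e1, e2]
    rw [Finset.sum_congr rfl h, Finset.sum_range_sub' (fun j => Ent Kf x0 (j+1))]
    have e3 : T + 1 - 2 + 1 = T := by omega
    simp only [e3]
  -- the t ≥ 2 terms
  have hWsum2 : ∀ t ∈ Finset.Icc 2 T, Wterm Kf pr x0 t
      = -(Cterm Kf pr x0 T t) + (Ent Kf x0 (t-1) - Ent Kf x0 t) := by
    intro t ht
    rw [Finset.mem_Icc] at ht
    obtain ⟨s, rfl⟩ : ∃ s, t = s + 2 := ⟨t - 2, by omega⟩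
    have h1 := Wterm_add_Cterm hKf_pos hKf_sum hpr_pos (x0 := x0) (T := T) (s := s) ht.2
    have h2 : s + 2 - 1 = s + 1 := by omega
    rw [h2]
    linarith
  have h2 : ∑ t ∈ Finset.Icc 2 T, Wterm Kf pr x0 t
      = -(∑ t ∈ Finset.Icc 2 T, Cterm Kf pr x0 T t) + (Ent Kf x0 1 - Ent Kf x0 T) := by
    rw [Finset.sum_congr rfl hWsum2, Finset.sum_add_distrib, htel, Finset.sum_neg_distrib]
  -- rewriting the RHS pieces
  have hA : (∑ x1, fwdMarg T Kf x0 1 x1 * Real.log (pr 1 x1 x0))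
      = ∑ x1, marg Kf x0 1 x1 * Real.log (pr 1 x1 x0) :=
    Finset.sum_congr rfl fun x1 _ => by
      rw [fwdMarg_eq_marg Kf x0 hKf_sum le_rfl (by omega)]
  have hKL : KLdiv (fwdMarg T Kf x0 T) pT
      = Ent Kf x0 T - ∑ x, marg Kf x0 T x * Real.log (pT x) := by
    unfold KLdiv Ent
    rw [← Finset.sum_sub_distrib]
    apply Finset.sum_congr rfl
    intro x _
    rw [fwdMarg_eq_marg Kf x0 hKf_sum (by omega) le_rfl,
        Real.log_div (marg_pos Kf x0 hKf_pos hKf_sum T x (by omega)).ne' (hpT_pos x).ne']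
    ring
  have hCdef : (∑ t ∈ Finset.Icc 2 T, ∑ xt, fwdMarg T Kf x0 t xt
        * KLdiv (fun u => fwdPost T Kf x0 t xt u) (fun u => pr t xt u))
      = ∑ t ∈ Finset.Icc 2 T, Cterm Kf pr x0 T t := rfl
  -- split off t = 1
  have hsplit : Finset.Icc 1 T = insert 1 (Finset.Icc 2 T) := by
    ext a
    simp only [Finset.mem_Icc, Finset.mem_insert]
    omega
  have hnot : (1 : ℕ) ∉ Finset.Icc 2 T := by simp
  refine ge_trans hJ (ge_of_eq ?_)
  rw [hA, hKL, hCdef, hexp, hsplit, Finset.sum_insert hnot, hW1, h2]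
  ring
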